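/- With notation as in the key lemma (a_n > 0, r_n positive integers, v_n the n-th approximant of the continued radical, f_k the denesting functions), for every n ≥ 1: v_{n+1} - v_n ≤ a_{n+1}^{1/r_{n+1}} / ∏_{i=1}^n (r_i · f_{i-1}(v_n)^{r_i - 1}). -/

import Mathlib

/-- `rad a r n i = (a i + (a (i+1) + ⋯ + (a n) ^ (1/r n)) ^ (1/r (i+1))) ^ (1/r i)`;
the `n`-th approximant `v n` of the continued radical is `rad a r n 1`. -/
noncomputable def rad (a : ℕ → ℝ) (r : ℕ → ℕ) (n : ℕ) : ℕ → ℝ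
  | i => if _ : i ≤ n then (a i + rad a r n (i + 1)) ^ ((r i : ℝ)⁻¹) else 0
termination_by i => n + 1 - i
decreasing_by omega

/-- The denesting functions: `den a r 0 y = y`, `den a r k y = (den a r (k-1) y) ^ (r k) - a k`. -/
noncomputable def den (a : ℕ → ℝ) (r : ℕ → ℕ) : ℕ → ℝ → ℝ
  | 0, y => y
  | k + 1, y => (den a r k y) ^ (r (k + 1)) - a (k + 1)

lemma rad_of_le {a : ℕ → ℝ} {r : ℕ → ℕ} {n i : ℕ} (h : i ≤ n) :
    rad a r n i = (a i + rad a r n (i + 1)) ^ ((r i : ℝ)⁻¹) := by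
  rw [rad]; simp [h]

lemma rad_of_gt {a : ℕ → ℝ} {r : ℕ → ℕ} {n i : ℕ} (h : n < i) :
    rad a r n i = 0 := by
  rw [rad]; simp [Nat.not_le.mpr h]

lemma rad_nonneg {a : ℕ → ℝ} {r : ℕ → ℕ} (ha : ∀ n, 1 ≤ n → 0 < a n) (n : ℕ) :
    ∀ i, 1 ≤ i → 0 ≤ rad a r n i := by
  suffices h : ∀ k i, n + 1 - i ≤ k → 1 ≤ i → 0 ≤ rad a r n i by
    intro i hi; exact h (n + 1 - i) i le_rfl hi
  intro k
  induction k with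
  | zero => intro i h hi; rw [rad_of_gt (by omega)]
  | succ k ih =>
      intro i h hi
      by_cases hin : i ≤ n
      · rw [rad_of_le hin]
        exact Real.rpow_nonneg
          (add_nonneg (ha i hi).le (ih (i + 1) (by omega) (by omega))) _
      · rw [rad_of_gt (by omega)]

lemma rad_pos {a : ℕ → ℝ} {r : ℕ → ℕ} (ha : ∀ n, 1 ≤ n → 0 < a n) {n i : ℕ}
    (hi : 1 ≤ i) (hin : i ≤ n) : 0 < rad a r n i := by
  rw [rad_of_le hin]
  exact Real.rpow_pos_of_pos
    (add_pos_of_pos_of_nonneg (ha i hi) (rad_nonneg ha n (i + 1) (by omega))) _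

lemma rad_mono {a : ℕ → ℝ} {r : ℕ → ℕ} (ha : ∀ n, 1 ≤ n → 0 < a n) (n : ℕ) :
    ∀ i, 1 ≤ i → rad a r n i ≤ rad a r (n + 1) i := by
  suffices h : ∀ k i, n + 2 - i ≤ k → 1 ≤ i → rad a r n i ≤ rad a r (n + 1) i by
    intro i hi; exact h (n + 2 - i) i le_rfl hi
  intro k
  induction k with
  | zero =>
      intro i h hi
      rw [rad_of_gt (show n < i by omega), rad_of_gt (show n + 1 < i by omega)]
  | succ k ih =>
      intro i h hi
      by_cases hin : i ≤ n
      · rw [rad_of_le hin, rad_of_le (show i ≤ n + 1 by omega)]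
        refine Real.rpow_le_rpow
          (add_nonneg (ha i hi).le (rad_nonneg ha n (i + 1) (by omega)))
          (add_le_add le_rfl (ih (i + 1) (by omega) (by omega)))
          (by positivity)
      · by_cases hin' : i ≤ n + 1
        · rw [rad_of_gt (by omega)]
          exact rad_nonneg ha (n + 1) i hi
        · rw [rad_of_gt (by omega), rad_of_gt (by omega)]

lemma pow_rad {a : ℕ → ℝ} {r : ℕ → ℕ} (ha : ∀ n, 1 ≤ n → 0 < a n)
    (hr : ∀ n, 1 ≤ r n) {n i : ℕ} (hi : 1 ≤ i) (hin : i ≤ n) :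
    rad a r n i ^ (r i) = a i + rad a r n (i + 1) := by
  rw [rad_of_le hin]
  exact Real.rpow_inv_natCast_pow
    (add_nonneg (ha i hi).le (rad_nonneg ha n (i + 1) (by omega)))
    (by have := hr i; omega)

lemma den_rad {a : ℕ → ℝ} {r : ℕ → ℕ} (ha : ∀ n, 1 ≤ n → 0 < a n)
    (hr : ∀ n, 1 ≤ r n) {n : ℕ} :
    ∀ k, k ≤ n → den a r k (rad a r n 1) = rad a r n (k + 1) := by
  intro k
  induction k with
  | zero => intro _; rfl
  | succ k ih =>
      intro hk
      rw [den, ih (by omega), pow_rad ha hr (by omega) hk]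
      ring

lemma bern (s : ℕ) {x y : ℝ} (hy : 0 < y) (hxy : y ≤ x) :
    ((s + 1 : ℕ) : ℝ) * y ^ s * (x - y) ≤ x ^ (s + 1) - y ^ (s + 1) := by
  have h0 : (-2 : ℝ) ≤ (x - y) / y :=
    le_trans (by norm_num) (div_nonneg (by linarith) hy.le)
  have h := one_add_mul_le_pow h0 (s + 1)
  have hxy' : 1 + (x - y) / y = x / y := by field_simp; ring
  rw [hxy', div_pow] at h
  have hyp : (0 : ℝ) < y ^ (s + 1) := pow_pos hy _
  have h2 := mul_le_mul_of_nonneg_right h hyp.le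
  have e1 : (1 + ((s : ℝ) + 1) * ((x - y) / y)) * y ^ (s + 1)
      = y ^ (s + 1) + ((s : ℝ) + 1) * y ^ s * (x - y) := by
    rw [pow_succ]
    field_simp
  have e2 : x ^ (s + 1) / y ^ (s + 1) * y ^ (s + 1) = x ^ (s + 1) :=
    div_mul_cancel₀ _ hyp.ne'
  push_cast at h2 ⊢
  rw [e1, e2] at h2
  linarith

theorem main_inequality (a : ℕ → ℝ) (r : ℕ → ℕ) (ha : ∀ n, 1 ≤ n → 0 < a n)
    (hr : ∀ n, 1 ≤ r n) :
    ∀ n, 1 ≤ n →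
      rad a r (n + 1) 1 - rad a r n 1 ≤
        (a (n + 1)) ^ ((r (n + 1) : ℝ)⁻¹) /
          ∏ i ∈ Finset.Icc 1 n,
            (r i : ℝ) * (den a r (i - 1) (rad a r n 1)) ^ (r i - 1) := by
  intro n hn
  -- rewrite den in the product as rad
  have hprod : ∀ k, k ≤ n →
      (∏ i ∈ Finset.Icc 1 k, (r i : ℝ) * (den a r (i - 1) (rad a r n 1)) ^ (r i - 1))
      = ∏ i ∈ Finset.Icc 1 k, (r i : ℝ) * (rad a r n i) ^ (r i - 1) := by
    intro k hk
    refine Finset.prod_congr rfl fun i hi => ?_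
    simp only [Finset.mem_Icc] at hi
    have h1 : i - 1 + 1 = i := by omega
    rw [den_rad ha hr (i - 1) (by omega), h1]
  -- key telescoping induction
  have key : ∀ k, k ≤ n →
      (∏ i ∈ Finset.Icc 1 k, (r i : ℝ) * (rad a r n i) ^ (r i - 1)) *
        (rad a r (n + 1) 1 - rad a r n 1)
      ≤ rad a r (n + 1) (k + 1) - rad a r n (k + 1) := by
    intro k
    induction k with
    | zero => intro _; simp
    | succ k ih =>
        intro hk
        have hk' : k ≤ n := by omega
        obtain ⟨s, hs⟩ : ∃ s, r (k + 1) = s + 1 := ⟨r (k + 1) - 1, by have := hr (k + 1); omega⟩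
        have hY : 0 < rad a r n (k + 1) := rad_pos ha (by omega) hk
        have hXY : rad a r n (k + 1) ≤ rad a r (n + 1) (k + 1) :=
          rad_mono ha n (k + 1) (by omega)
        have hb := bern s hY hXY
        have hpX : rad a r (n + 1) (k + 1) ^ (r (k + 1)) = a (k + 1) + rad a r (n + 1) (k + 2) :=
          pow_rad ha hr (by omega) (by omega)
        have hpY : rad a r n (k + 1) ^ (r (k + 1)) = a (k + 1) + rad a r n (k + 2) :=
          pow_rad ha hr (by omega) hk
        rw [hs] at hpX hpY
        rw [Finset.prod_Icc_succ_top (by omega : 1 ≤ k + 1)]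
        have hc : (0 : ℝ) ≤ (r (k + 1) : ℝ) * (rad a r n (k + 1)) ^ (r (k + 1) - 1) := by
          positivity
        have ih' := ih hk'
        have hmul := mul_le_mul_of_nonneg_left ih' hc
        have hrw : r (k + 1) - 1 = s := by omega
        calc (∏ i ∈ Finset.Icc 1 k, (r i : ℝ) * (rad a r n i) ^ (r i - 1)) *
              ((r (k + 1) : ℝ) * (rad a r n (k + 1)) ^ (r (k + 1) - 1)) *
              (rad a r (n + 1) 1 - rad a r n 1)
            = ((r (k + 1) : ℝ) * (rad a r n (k + 1)) ^ (r (k + 1) - 1)) *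
              ((∏ i ∈ Finset.Icc 1 k, (r i : ℝ) * (rad a r n i) ^ (r i - 1)) *
               (rad a r (n + 1) 1 - rad a r n 1)) := by ring
          _ ≤ ((r (k + 1) : ℝ) * (rad a r n (k + 1)) ^ (r (k + 1) - 1)) *
              (rad a r (n + 1) (k + 1) - rad a r n (k + 1)) := hmul
          _ ≤ rad a r (n + 1) (k + 1) ^ (s + 1) - rad a r n (k + 1) ^ (s + 1) := by
              rw [hrw, hs]
              convert hb using 2
          _ = rad a r (n + 1) (k + 2) - rad a r n (k + 2) := by
              rw [hpX, hpY]; ring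
  have key' := key n le_rfl
  -- evaluate endpoints
  have hXn : rad a r (n + 1) (n + 1) = a (n + 1) ^ ((r (n + 1) : ℝ)⁻¹) := by
    rw [rad_of_le le_rfl, rad_of_gt (by omega), add_zero]
  have hYn : rad a r n (n + 1) = 0 := rad_of_gt (by omega)
  rw [hXn, hYn, sub_zero] at key'
  have hP : 0 < ∏ i ∈ Finset.Icc 1 n, (r i : ℝ) * (rad a r n i) ^ (r i - 1) := by
    refine Finset.prod_pos fun i hi => ?_
    simp only [Finset.mem_Icc] at hi
    have h1 : 0 < rad a r n i := rad_pos ha hi.1 hi.2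
    have h2 : 0 < (r i : ℝ) := by exact_mod_cast hr i
    positivity
  rw [hprod n le_rfl, le_div_iff₀ hP]
  linarith [key']
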